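/- Let N < p < q < ∞ and Ω ⊊ ℝ^N open. Setting γ = N/q + (p-N)/p, the Hardy constants satisfy the interpolation bound 𝔥_{p,q}(Ω) ≥ 𝔥_p(Ω)^{p/q} · 𝔥_{p,∞}(Ω)^{(q-p)/q}. -/

import Mathlib

open Set Metric MeasureTheory

/-- The sharp Hardy constant
`𝔥_{p,q}(Ω) = inf {∫_Ω |∇u|^p : u ∈ C_0^∞(Ω), ‖u/d_Ω^γ‖_{L^q(Ω)} = 1}`
with `γ = N/q + (p-N)/p`. -/
noncomputable def hardyPQ {N : ℕ} (p q : ℝ) (Ω : Set (EuclideanSpace ℝ (Fin N))) : ℝ :=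
  sInf {E : ℝ | ∃ u : EuclideanSpace ℝ (Fin N) → ℝ, ContDiff ℝ (⊤ : ℕ∞) u ∧
    HasCompactSupport u ∧ tsupport u ⊆ Ω ∧
    (∫ x in Ω, (|u x| / Metric.infDist x Ωᶜ ^ ((N : ℝ)/q + (p - N)/p)) ^ q) = 1 ∧
    E = ∫ x in Ω, ‖gradient u x‖ ^ p}

/-- The sharp Hardy constant `𝔥_p(Ω) = inf {∫_Ω |∇u|^p : u ∈ C_0^∞(Ω), ‖u/d_Ω‖_{L^p(Ω)} = 1}`. -/
noncomputable def hardyP {N : ℕ} (p : ℝ) (Ω : Set (EuclideanSpace ℝ (Fin N))) : ℝ :=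
  sInf {E : ℝ | ∃ u : EuclideanSpace ℝ (Fin N) → ℝ, ContDiff ℝ (⊤ : ℕ∞) u ∧
    HasCompactSupport u ∧ tsupport u ⊆ Ω ∧
    (∫ x in Ω, (|u x| / Metric.infDist x Ωᶜ) ^ p) = 1 ∧
    E = ∫ x in Ω, ‖gradient u x‖ ^ p}

/-- The sharp endpoint Hardy constant
`𝔥_{p,∞}(Ω) = inf {∫_Ω |∇u|^p : u ∈ C_0^∞(Ω), ‖u/d_Ω^{1-N/p}‖_{L^∞(Ω)} = 1}`. -/
noncomputable def hardyInfty {N : ℕ} (p : ℝ) (Ω : Set (EuclideanSpace ℝ (Fin N))) : ℝ :=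
  sInf {E : ℝ | ∃ u : EuclideanSpace ℝ (Fin N) → ℝ, ContDiff ℝ (⊤ : ℕ∞) u ∧
    HasCompactSupport u ∧ tsupport u ⊆ Ω ∧
    (⨆ x ∈ Ω, ENNReal.ofReal (|u x| / Metric.infDist x Ωᶜ ^ (1 - (N : ℝ)/p))) = 1 ∧
    E = ∫ x in Ω, ‖gradient u x‖ ^ p}

section Aux

variable {N : ℕ}

lemma hardy_grad_const_mul {u : EuclideanSpace ℝ (Fin N) → ℝ} (hu : Differentiable ℝ u)
    (c : ℝ) (x : EuclideanSpace ℝ (Fin N)) :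
    gradient (fun y => c * u y) x = c • gradient u x := by
  unfold gradient
  rw [fderiv_const_mul (hu x) c, _root_.map_smul]

lemma hardy_integrableOn_aux {F : EuclideanSpace ℝ (Fin N) → ℝ}
    {Ω K : Set (EuclideanSpace ℝ (Fin N))} (hΩ : IsOpen Ω) (hK : IsCompact K) (hKΩ : K ⊆ Ω)
    (hF : ContinuousOn F Ω) (h0 : ∀ x ∉ K, F x = 0) : IntegrableOn F Ω := by
  have h1 : IntegrableOn F K := (hF.mono hKΩ).integrableOn_compact hK
  have heq : Ω.indicator F = K.indicator F := by
    funext x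
    by_cases hx : x ∈ K
    · rw [indicator_of_mem hx, indicator_of_mem (hKΩ hx)]
    · rw [indicator_of_notMem hx]
      by_cases hx2 : x ∈ Ω
      · rw [indicator_of_mem hx2]; exact h0 x hx
      · rw [indicator_of_notMem hx2]
  rw [← integrable_indicator_iff hΩ.measurableSet, heq,
    integrable_indicator_iff hK.isClosed.measurableSet]
  exact h1

lemma hardy_contOn_div {u : EuclideanSpace ℝ (Fin N) → ℝ} (hu : Continuous u)
    {Ω : Set (EuclideanSpace ℝ (Fin N))}
    (hd : ∀ x ∈ Ω, 0 < infDist x Ωᶜ) (γ : ℝ) :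
    ContinuousOn (fun x => |u x| / infDist x Ωᶜ ^ γ) Ω := by
  intro x hx
  apply ContinuousAt.continuousWithinAt
  have hdx := hd x hx
  have h1 : ContinuousAt (fun x => infDist x Ωᶜ ^ γ) x :=
    ContinuousAt.comp (x := x) (g := fun t : ℝ => t ^ γ)
      (Real.continuousAt_rpow_const _ γ (Or.inl hdx.ne'))
      (continuous_infDist_pt _).continuousAt
  exact (hu.abs.continuousAt).div h1 (Real.rpow_pos_of_pos hdx γ).ne'

lemma hardy_contOn_rpow {u : EuclideanSpace ℝ (Fin N) → ℝ} (hu : Continuous u)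
    {Ω : Set (EuclideanSpace ℝ (Fin N))}
    (hd : ∀ x ∈ Ω, 0 < infDist x Ωᶜ) (γ s : ℝ) (hs : 0 ≤ s) :
    ContinuousOn (fun x => (|u x| / infDist x Ωᶜ ^ γ) ^ s) Ω := by
  intro x hx
  exact ((Real.continuousAt_rpow_const _ s (Or.inr hs)).comp_continuousWithinAt
    (hardy_contOn_div hu hd γ x hx))

end Aux

section Key
variable {N : ℕ}

lemma hardy_bddBelow (p : ℝ) (Ω : Set (EuclideanSpace ℝ (Fin N))) (hΩ : IsOpen Ω)
    (S : Set ℝ)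
    (hS : ∀ E ∈ S, ∃ u : EuclideanSpace ℝ (Fin N) → ℝ,
      E = ∫ x in Ω, ‖gradient u x‖ ^ p) : BddBelow S := by
  refine ⟨0, fun E hE => ?_⟩
  obtain ⟨u, rfl⟩ := hS E hE
  exact setIntegral_nonneg hΩ.measurableSet fun x _ => Real.rpow_nonneg (norm_nonneg _) p

lemma hardy_key {N : ℕ} (hN : 0 < N) (p q : ℝ) (hp : (N : ℝ) < p) (hpq : p < q)
    (Ω : Set (EuclideanSpace ℝ (Fin N))) (hΩ : IsOpen Ω) (hc : Ωᶜ.Nonempty)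
    (u : EuclideanSpace ℝ (Fin N) → ℝ) (hu : ContDiff ℝ (⊤ : ℕ∞) u)
    (hcs : HasCompactSupport u) (hsupp : tsupport u ⊆ Ω)
    (hint : (∫ x in Ω, (|u x| / Metric.infDist x Ωᶜ ^ ((N : ℝ)/q + (p - N)/p)) ^ q) = 1) :
    hardyP p Ω ^ (p/q) * hardyInfty p Ω ^ ((q - p)/q) ≤ ∫ x in Ω, ‖gradient u x‖ ^ p := by
  have hp0 : (0:ℝ) < p := lt_of_le_of_lt (Nat.cast_nonneg N) hp
  have hq0 : (0:ℝ) < q := hp0.trans hpq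
  have hqp : (0:ℝ) < q - p := sub_pos.2 hpq
  have hdiff : Differentiable ℝ u := hu.differentiable (by simp)
  set γ : ℝ := (N : ℝ)/q + (p - N)/p with hγ
  set β : ℝ := 1 - (N : ℝ)/p with hβ
  have hd : ∀ x ∈ Ω, 0 < infDist x Ωᶜ := fun x hx =>
    (hΩ.isClosed_compl.notMem_iff_infDist_pos hc).1 (by simpa using hx)
  have hd0 : ∀ x : EuclideanSpace ℝ (Fin N), 0 ≤ infDist x Ωᶜ := fun x => infDist_nonneg
  set Ee : ℝ := ∫ x in Ω, ‖gradient u x‖ ^ p with hEe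
  have hEe0 : 0 ≤ Ee := by
    rw [hEe]
    exact setIntegral_nonneg hΩ.measurableSet fun x _ => Real.rpow_nonneg (norm_nonneg _) p
  have hucont : Continuous u := hu.continuous
  have hg0 : ∀ x : EuclideanSpace ℝ (Fin N), 0 ≤ |u x| / infDist x Ωᶜ ^ β := fun x =>
    div_nonneg (abs_nonneg _) (Real.rpow_nonneg (hd0 x) β)
  set M' : ENNReal := ⨆ x ∈ Ω, ENNReal.ofReal (|u x| / infDist x Ωᶜ ^ β) with hM'
  obtain ⟨C, hC⟩ := hcs.isCompact.exists_bound_of_continuousOn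
    ((hardy_contOn_div hucont hd β).mono hsupp)
  have hgC : ∀ x ∈ Ω, |u x| / infDist x Ωᶜ ^ β ≤ max C 0 := by
    intro x hx
    by_cases hxK : x ∈ tsupport u
    · have h := hC x hxK
      rw [Real.norm_eq_abs] at h
      exact le_max_of_le_left ((le_abs_self _).trans h)
    · simp [image_eq_zero_of_notMem_tsupport hxK]
  have hM'top : M' ≠ ⊤ := by
    rw [hM']
    refine ne_top_of_le_ne_top (b := ENNReal.ofReal (max C 0)) ENNReal.ofReal_ne_top ?_
    exact iSup₂_le fun x hx => ENNReal.ofReal_le_ofReal (hgC x hx)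
  set M : ℝ := M'.toReal with hM
  have hM0 : 0 ≤ M := ENNReal.toReal_nonneg
  have hgM : ∀ x ∈ Ω, |u x| / infDist x Ωᶜ ^ β ≤ M := by
    intro x hx
    refine (ENNReal.ofReal_le_iff_le_toReal hM'top).1 ?_
    rw [hM']
    exact le_iSup₂ (f := fun x (_ : x ∈ Ω) => ENNReal.ofReal (|u x| / infDist x Ωᶜ ^ β)) x hx
  -- pointwise identity and bound
  have hpt : ∀ x ∈ Ω, (|u x| / infDist x Ωᶜ ^ γ) ^ q
      ≤ (|u x| / infDist x Ωᶜ) ^ p * M ^ (q - p) := by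
    intro x hx
    have hb : 0 < infDist x Ωᶜ := hd x hx
    have hexp : γ * q = p + β * (q - p) := by
      rw [hγ, hβ]; field_simp; ring
    have hid : (|u x| / infDist x Ωᶜ ^ γ) ^ q
        = (|u x| / infDist x Ωᶜ) ^ p * (|u x| / infDist x Ωᶜ ^ β) ^ (q - p) := by
      rcases eq_or_lt_of_le (abs_nonneg (u x)) with h0 | h0
      · rw [← h0]
        simp [Real.zero_rpow hq0.ne', Real.zero_rpow hp0.ne', zero_div]
      · rw [Real.div_rpow h0.le (Real.rpow_nonneg hb.le γ) q,
          Real.div_rpow h0.le hb.le p,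
          Real.div_rpow h0.le (Real.rpow_nonneg hb.le β) (q - p),
          ← Real.rpow_mul hb.le γ q, ← Real.rpow_mul hb.le β (q - p),
          div_mul_div_comm, ← Real.rpow_add h0, ← Real.rpow_add hb, hexp,
          add_sub_cancel]
    rw [hid]
    refine mul_le_mul_of_nonneg_left ?_ (Real.rpow_nonneg (div_nonneg (abs_nonneg _) hb.le) p)
    exact Real.rpow_le_rpow (hg0 x) (hgM x hx) hqp.le
  -- integrability
  have hvan : ∀ s : ℝ, s ≠ 0 → ∀ γ' : ℝ, ∀ x ∉ tsupport u,
      (|u x| / infDist x Ωᶜ ^ γ') ^ s = 0 := by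
    intro s hs γ' x hx
    simp [image_eq_zero_of_notMem_tsupport hx, Real.zero_rpow hs]
  have hInt1 : IntegrableOn (fun x => (|u x| / infDist x Ωᶜ ^ γ) ^ q) Ω :=
    hardy_integrableOn_aux hΩ hcs.isCompact hsupp
      (hardy_contOn_rpow hucont hd γ q hq0.le) (hvan q hq0.ne' γ)
  have hInt2 : IntegrableOn (fun x => (|u x| / infDist x Ωᶜ) ^ p) Ω := by
    have he : (fun x => (|u x| / infDist x Ωᶜ) ^ p)
        = fun x => (|u x| / infDist x Ωᶜ ^ (1:ℝ)) ^ p := by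
      funext x; rw [Real.rpow_one]
    rw [he]
    exact hardy_integrableOn_aux hΩ hcs.isCompact hsupp
      (hardy_contOn_rpow hucont hd 1 p hp0.le) (hvan p hp0.ne' 1)
  set A : ℝ := ∫ x in Ω, (|u x| / infDist x Ωᶜ) ^ p with hA
  have hA0 : 0 ≤ A := setIntegral_nonneg hΩ.measurableSet fun x _ =>
    Real.rpow_nonneg (div_nonneg (abs_nonneg _) (hd0 x)) p
  have h1le : (1:ℝ) ≤ A * M ^ (q - p) := by
    calc (1:ℝ) = ∫ x in Ω, (|u x| / infDist x Ωᶜ ^ γ) ^ q := hint.symm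
    _ ≤ ∫ x in Ω, (|u x| / infDist x Ωᶜ) ^ p * M ^ (q - p) :=
        setIntegral_mono_on hInt1 (hInt2.mul_const _) hΩ.measurableSet hpt
    _ = A * M ^ (q - p) := by rw [integral_mul_const]
  have hApos : 0 < A := by
    rcases hA0.lt_or_eq with h | h
    · exact h
    · exfalso; rw [← h, zero_mul] at h1le; linarith
  have hMpos : 0 < M := by
    rcases hM0.lt_or_eq with h | h
    · exact h
    · exfalso
      rw [← h, Real.zero_rpow hqp.ne', mul_zero] at h1le
      linarith
  -- bound on hardyP
  have hP : hardyP p Ω ≤ A⁻¹ * Ee := by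
    set c : ℝ := A ^ (-(1/p)) with hc
    have hcpos : 0 < c := Real.rpow_pos_of_pos hApos _
    have hcp : c ^ p = A⁻¹ := by
      rw [hc, ← Real.rpow_mul hApos.le]
      rw [show -(1/p) * p = -1 by field_simp]
      exact Real.rpow_neg_one A
    refine csInf_le (hardy_bddBelow p Ω hΩ _ ?_) ?_
    · rintro E ⟨u', -, -, -, -, hE'⟩; exact ⟨u', hE'⟩
    have hsup' : Function.support (fun y => c * u y) ⊆ Function.support u := by
      intro x hx
      simp only [Function.mem_support] at hx ⊢
      intro h; exact hx (by rw [h, mul_zero])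
    refine ⟨fun y => c * u y, contDiff_const.mul hu, hcs.mono hsup',
      (closure_mono hsup').trans hsupp, ?_, ?_⟩
    · have hptc : ∀ x : EuclideanSpace ℝ (Fin N),
          (|c * u x| / infDist x Ωᶜ) ^ p = c ^ p * (|u x| / infDist x Ωᶜ) ^ p := by
        intro x
        rw [abs_mul, abs_of_pos hcpos, mul_div_assoc,
          Real.mul_rpow hcpos.le (div_nonneg (abs_nonneg _) (hd0 x))]
      simp_rw [hptc]
      rw [integral_const_mul, ← hA, hcp, inv_mul_cancel₀ hApos.ne']
    · have hptg : ∀ x : EuclideanSpace ℝ (Fin N),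
          ‖gradient (fun y => c * u y) x‖ ^ p = c ^ p * ‖gradient u x‖ ^ p := by
        intro x
        rw [hardy_grad_const_mul hdiff c x, norm_smul, Real.norm_eq_abs, abs_of_pos hcpos,
          Real.mul_rpow hcpos.le (norm_nonneg _)]
      simp_rw [hptg]
      rw [integral_const_mul, ← hEe, hcp]
  -- bound on hardyInfty
  have hI : hardyInfty p Ω ≤ (M ^ p)⁻¹ * Ee := by
    have hMinv : (0:ℝ) < M⁻¹ := inv_pos.2 hMpos
    have hcp : M⁻¹ ^ p = (M ^ p)⁻¹ := Real.inv_rpow hM0 p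
    refine csInf_le (hardy_bddBelow p Ω hΩ _ ?_) ?_
    · rintro E ⟨u', -, -, -, -, hE'⟩; exact ⟨u', hE'⟩
    have hsup' : Function.support (fun y => M⁻¹ * u y) ⊆ Function.support u := by
      intro x hx
      simp only [Function.mem_support] at hx ⊢
      intro h; exact hx (by rw [h, mul_zero])
    refine ⟨fun y => M⁻¹ * u y, contDiff_const.mul hu, hcs.mono hsup',
      (closure_mono hsup').trans hsupp, ?_, ?_⟩
    · have hM'0 : M' ≠ 0 := by
        intro h0
        rw [hM, h0] at hMpos
        simp at hMpos
      have hptc : ∀ x : EuclideanSpace ℝ (Fin N),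
          ENNReal.ofReal (|M⁻¹ * u x| / infDist x Ωᶜ ^ (1 - (N:ℝ)/p))
            = ENNReal.ofReal M⁻¹ * ENNReal.ofReal (|u x| / infDist x Ωᶜ ^ (1 - (N:ℝ)/p)) := by
        intro x
        rw [abs_mul, abs_of_pos hMinv, mul_div_assoc, ENNReal.ofReal_mul hMinv.le]
      simp_rw [hptc, ← ENNReal.mul_iSup]
      have : (⨆ x ∈ Ω, ENNReal.ofReal (|u x| / infDist x Ωᶜ ^ (1 - (N:ℝ)/p))) = M' := by
        rw [hM']
      rw [this, ENNReal.ofReal_inv_of_pos hMpos, hM, ENNReal.ofReal_toReal hM'top,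
        ENNReal.inv_mul_cancel hM'0 hM'top]
    · have hptg : ∀ x : EuclideanSpace ℝ (Fin N),
          ‖gradient (fun y => M⁻¹ * u y) x‖ ^ p = M⁻¹ ^ p * ‖gradient u x‖ ^ p := by
        intro x
        rw [hardy_grad_const_mul hdiff M⁻¹ x, norm_smul, Real.norm_eq_abs, abs_of_pos hMinv,
          Real.mul_rpow hMinv.le (norm_nonneg _)]
      simp_rw [hptg]
      rw [integral_const_mul, ← hEe, hcp]
  -- nonnegativity of the Hardy constants
  have hPnn : 0 ≤ hardyP p Ω := by
    unfold hardyP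
    refine Real.sInf_nonneg fun E hE => ?_
    obtain ⟨u', -, -, -, -, hE'⟩ := hE
    rw [hE']
    exact setIntegral_nonneg hΩ.measurableSet fun x _ => Real.rpow_nonneg (norm_nonneg _) p
  have hInn : 0 ≤ hardyInfty p Ω := by
    unfold hardyInfty
    refine Real.sInf_nonneg fun E hE => ?_
    obtain ⟨u', -, -, -, -, hE'⟩ := hE
    rw [hE']
    exact setIntegral_nonneg hΩ.measurableSet fun x _ => Real.rpow_nonneg (norm_nonneg _) p
  rcases hEe0.eq_or_lt with hE0 | hEpos
  · -- degenerate case Ee = 0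
    have hP0 : hardyP p Ω = 0 :=
      le_antisymm (hP.trans (by rw [← hE0, mul_zero])) hPnn
    rw [hP0, Real.zero_rpow (div_ne_zero hp0.ne' hq0.ne'), zero_mul, ← hE0]
  · have hMp : (0:ℝ) < M ^ p := Real.rpow_pos_of_pos hMpos p
    have step1 : hardyP p Ω ^ (p/q) ≤ (A⁻¹ * Ee) ^ (p/q) :=
      Real.rpow_le_rpow hPnn hP (by positivity)
    have step2 : hardyInfty p Ω ^ ((q - p)/q) ≤ ((M ^ p)⁻¹ * Ee) ^ ((q - p)/q) :=
      Real.rpow_le_rpow hInn hI (by positivity)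
    have hmul : hardyP p Ω ^ (p/q) * hardyInfty p Ω ^ ((q - p)/q)
        ≤ (A⁻¹ * Ee) ^ (p/q) * ((M ^ p)⁻¹ * Ee) ^ ((q - p)/q) :=
      mul_le_mul step1 step2 (Real.rpow_nonneg hInn _)
        (Real.rpow_nonneg (by positivity) _)
    refine hmul.trans ?_
    have heq : (A⁻¹ * Ee) ^ (p/q) * ((M ^ p)⁻¹ * Ee) ^ ((q - p)/q)
        = (A * M ^ (q - p)) ^ (-(p/q)) * Ee := by
      rw [Real.mul_rpow (inv_nonneg.2 hApos.le) hEe0,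
        Real.mul_rpow (inv_nonneg.2 hMp.le) hEe0,
        Real.inv_rpow hApos.le, Real.inv_rpow hMp.le,
        ← Real.rpow_neg hApos.le, ← Real.rpow_neg hMp.le,
        ← Real.rpow_mul hM0 p (-((q - p)/q)),
        Real.mul_rpow hApos.le (Real.rpow_nonneg hM0 (q - p)),
        ← Real.rpow_mul hM0 (q - p) (-(p/q)),
        show p * -((q - p)/q) = (q - p) * -(p/q) by ring,
        mul_mul_mul_comm, ← Real.rpow_add hEpos,
        show p/q + (q - p)/q = 1 by field_simp; ring,
        Real.rpow_one]
    rw [heq]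
    refine mul_le_of_le_one_left hEe0 ?_
    exact Real.rpow_le_one_of_one_le_of_nonpos h1le
      (neg_nonpos.2 (div_nonneg hp0.le hq0.le))

end Key

lemma hardy_nonempty {N : ℕ} (p q : ℝ) (hq0 : 0 < q)
    (Ω : Set (EuclideanSpace ℝ (Fin N))) (hΩ : IsOpen Ω) (hΩne : Ω.Nonempty)
    (hc : Ωᶜ.Nonempty) :
    {E : ℝ | ∃ u : EuclideanSpace ℝ (Fin N) → ℝ, ContDiff ℝ (⊤ : ℕ∞) u ∧
      HasCompactSupport u ∧ tsupport u ⊆ Ω ∧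
      (∫ x in Ω, (|u x| / Metric.infDist x Ωᶜ ^ ((N : ℝ)/q + (p - N)/p)) ^ q) = 1 ∧
      E = ∫ x in Ω, ‖gradient u x‖ ^ p}.Nonempty := by
  set γ : ℝ := (N : ℝ)/q + (p - N)/p with hγ
  obtain ⟨x₀, hx₀⟩ := hΩne
  obtain ⟨r, hr, hball⟩ := Metric.isOpen_iff.1 hΩ x₀ hx₀
  have hd : ∀ x ∈ Ω, 0 < infDist x Ωᶜ := fun x hx =>
    (hΩ.isClosed_compl.notMem_iff_infDist_pos hc).1 (by simpa using hx)
  let f : ContDiffBump x₀ := ⟨r/4, r/2, by positivity, by linarith⟩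
  have hts : tsupport f ⊆ Ω := by
    rw [f.tsupport_eq]
    exact (closedBall_subset_ball (by simp [f]; linarith)).trans hball
  have hvan : ∀ x ∉ tsupport (f : EuclideanSpace ℝ (Fin N) → ℝ),
      (|f x| / infDist x Ωᶜ ^ γ) ^ q = 0 := by
    intro x hx
    simp [image_eq_zero_of_notMem_tsupport hx, Real.zero_rpow hq0.ne']
  have hIntF : IntegrableOn (fun x => (|(f : EuclideanSpace ℝ (Fin N) → ℝ) x|
      / infDist x Ωᶜ ^ γ) ^ q) Ω :=
    hardy_integrableOn_aux hΩ f.hasCompactSupport hts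
      (hardy_contOn_rpow f.continuous hd γ q hq0.le) hvan
  set I : ℝ := ∫ x in Ω, (|(f : EuclideanSpace ℝ (Fin N) → ℝ) x| / infDist x Ωᶜ ^ γ) ^ q
    with hIdef
  have hIpos : 0 < I := by
    rw [hIdef, setIntegral_pos_iff_support_of_nonneg_ae
      (Filter.Eventually.of_forall fun x =>
        Real.rpow_nonneg (div_nonneg (abs_nonneg _) (Real.rpow_nonneg infDist_nonneg γ)) q)
      hIntF]
    refine lt_of_lt_of_le (measure_ball_pos volume x₀ (show (0:ℝ) < r/4 by positivity))
      (measure_mono ?_)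
    intro x hx
    have hxΩ : x ∈ Ω := hball (mem_of_subset_of_mem (ball_subset_ball (by linarith)) hx)
    have hfx : (f : EuclideanSpace ℝ (Fin N) → ℝ) x = 1 :=
      f.one_of_mem_closedBall (ball_subset_closedBall hx)
    refine ⟨?_, hxΩ⟩
    rw [Function.mem_support]
    have : (0:ℝ) < (|(f : EuclideanSpace ℝ (Fin N) → ℝ) x| / infDist x Ωᶜ ^ γ) ^ q := by
      apply Real.rpow_pos_of_pos
      apply div_pos
      · rw [hfx]; norm_num
      · exact Real.rpow_pos_of_pos (hd x hxΩ) γ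
    exact this.ne'
  set c : ℝ := I ^ (-(1/q)) with hcdef
  have hcpos : 0 < c := Real.rpow_pos_of_pos hIpos _
  have hcq : c ^ q = I⁻¹ := by
    rw [hcdef, ← Real.rpow_mul hIpos.le]
    rw [show -(1/q) * q = -1 by field_simp]
    exact Real.rpow_neg_one I
  have hsup' : Function.support (fun y => c * (f : EuclideanSpace ℝ (Fin N) → ℝ) y)
      ⊆ Function.support (f : EuclideanSpace ℝ (Fin N) → ℝ) := by
    intro x hx
    simp only [Function.mem_support] at hx ⊢
    intro h; exact hx (by rw [h, mul_zero])
  refine ⟨∫ x in Ω, ‖gradient (fun y => c * (f : EuclideanSpace ℝ (Fin N) → ℝ) y) x‖ ^ p,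
    fun y => c * (f : EuclideanSpace ℝ (Fin N) → ℝ) y,
    contDiff_const.mul (f.contDiff (n := (⊤ : ℕ∞))),
    f.hasCompactSupport.mono hsup', (closure_mono hsup').trans hts, ?_, rfl⟩
  have hptc : ∀ x : EuclideanSpace ℝ (Fin N),
      (|c * (f : EuclideanSpace ℝ (Fin N) → ℝ) x| / infDist x Ωᶜ ^ γ) ^ q
        = c ^ q * (|(f : EuclideanSpace ℝ (Fin N) → ℝ) x| / infDist x Ωᶜ ^ γ) ^ q := by
    intro x
    rw [abs_mul, abs_of_pos hcpos, mul_div_assoc,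
      Real.mul_rpow hcpos.le (div_nonneg (abs_nonneg _) (Real.rpow_nonneg infDist_nonneg γ))]
  simp_rw [hptc]
  rw [integral_const_mul, ← hIdef, hcq, inv_mul_cancel₀ hIpos.ne']


/-- Interpolation bound between the Hardy constants: for `N < p < q < ∞` and `Ω ⊊ ℝ^N` open,
`𝔥_{p,q}(Ω) ≥ 𝔥_p(Ω)^{p/q} · 𝔥_{p,∞}(Ω)^{(q-p)/q}`. -/
theorem hardy_interpolation {N : ℕ} (hN : 0 < N) (p q : ℝ) (hp : (N : ℝ) < p) (hpq : p < q)
    (Ω : Set (EuclideanSpace ℝ (Fin N))) (hΩ : IsOpen Ω) (hne : Ω ≠ Set.univ) :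
    hardyP p Ω ^ (p/q) * hardyInfty p Ω ^ ((q - p)/q) ≤ hardyPQ p q Ω := by
  have hp0 : (0:ℝ) < p := lt_of_le_of_lt (Nat.cast_nonneg N) hp
  have hq0 : (0:ℝ) < q := hp0.trans hpq
  rcases Ω.eq_empty_or_nonempty with rfl | hΩne
  · have hPQ : hardyPQ p q (∅ : Set (EuclideanSpace ℝ (Fin N))) = 0 := by
      unfold hardyPQ
      rw [show {E : ℝ | ∃ u : EuclideanSpace ℝ (Fin N) → ℝ, ContDiff ℝ (⊤ : ℕ∞) u ∧
        HasCompactSupport u ∧ tsupport u ⊆ (∅ : Set (EuclideanSpace ℝ (Fin N))) ∧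
        (∫ x in (∅ : Set (EuclideanSpace ℝ (Fin N))),
          (|u x| / Metric.infDist x (∅ : Set (EuclideanSpace ℝ (Fin N)))ᶜ
            ^ ((N : ℝ)/q + (p - N)/p)) ^ q) = 1 ∧
        E = ∫ x in (∅ : Set (EuclideanSpace ℝ (Fin N))), ‖gradient u x‖ ^ p} = ∅ from ?_,
        Real.sInf_empty]
      ext E
      simp only [mem_setOf_eq, mem_empty_iff_false, iff_false, not_exists]
      rintro u ⟨-, -, -, hint, -⟩
      rw [Measure.restrict_empty, integral_zero_measure] at hint
      exact one_ne_zero hint.symm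
    have hP0 : hardyP p (∅ : Set (EuclideanSpace ℝ (Fin N))) = 0 := by
      unfold hardyP
      rw [show {E : ℝ | ∃ u : EuclideanSpace ℝ (Fin N) → ℝ, ContDiff ℝ (⊤ : ℕ∞) u ∧
        HasCompactSupport u ∧ tsupport u ⊆ (∅ : Set (EuclideanSpace ℝ (Fin N))) ∧
        (∫ x in (∅ : Set (EuclideanSpace ℝ (Fin N))),
          (|u x| / Metric.infDist x (∅ : Set (EuclideanSpace ℝ (Fin N)))ᶜ) ^ p) = 1 ∧
        E = ∫ x in (∅ : Set (EuclideanSpace ℝ (Fin N))), ‖gradient u x‖ ^ p} = ∅ from ?_,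
        Real.sInf_empty]
      ext E
      simp only [mem_setOf_eq, mem_empty_iff_false, iff_false, not_exists]
      rintro u ⟨-, -, -, hint, -⟩
      rw [Measure.restrict_empty, integral_zero_measure] at hint
      exact one_ne_zero hint.symm
    rw [hPQ, hP0, Real.zero_rpow (div_ne_zero hp0.ne' hq0.ne'), zero_mul]
  · have hc : Ωᶜ.Nonempty := nonempty_compl.2 hne
    unfold hardyPQ
    refine le_csInf (hardy_nonempty p q hq0 Ω hΩ hΩne hc) ?_
    rintro E ⟨u, hu, hcs, hsupp, hint, hE⟩
    rw [hE]
    exact hardy_key hN p q hp hpq Ω hΩ hc u hu hcs hsupp hint
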